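/- Let f be a polynomial over ℝ, written as f(z) = k(z²) + z·l(z²) with k, l polynomials over ℝ. Let a, b₁, b₂ be pure quaternions with b₁ parallel to a and b₂ perpendicular to a (so b₂ anti-commutes with a). Set η = a + ε b₁ + ε b₂ and α = a + ε b₁ in the dual quaternions. Then f(η) = f(α) + l(α²)·ε b₂. -/
import Mathlib


open Quaternion DualNumber TrivSqZeroExt Polynomial

private lemma commute_aeval_aux {A : Type*} [Ring A] [Algebra ℝ A] (x y : A)
    (h : Commute x y) (p : ℝ[X]) : Commute (aeval x p) y := by
  induction p using Polynomial.induction_on with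
  | C c => simp only [aeval_C]; exact Algebra.commutes c y
  | add p q hp hq => simpa [map_add] using hp.add_left hq
  | monomial n c hn =>
      simp only [map_mul, aeval_C, aeval_X_pow, aeval_X, pow_succ, ← mul_assoc] at hn ⊢
      exact hn.mul_left h

private lemma aux_sq {A : Type*} [Ring A] (α β : A) (hanti : β * α = -(α * β))
    (hββ : β * β = 0) : (α + β) ^ 2 = α ^ 2 := by
  rw [sq, sq, mul_add, add_mul, add_mul, hββ, hanti]
  abel

set_option maxHeartbeats 1000000 in
theorem stmt_10 (f k l : ℝ[X])
    (hf : ∀ z : ℝ, f.eval z = k.eval (z ^ 2) + z * l.eval (z ^ 2))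
    (a b₁ b₂ : ℍ[ℝ]) (ha : a.re = 0) (hb₁re : b₁.re = 0) (hb₂re : b₂.re = 0)
    (hpar : ∃ t : ℝ, b₁ = t • a) (hperp : b₂ * a = -(a * b₂)) :
    aeval ((inl a : DualNumber ℍ[ℝ]) + eps * inl b₁ + eps * inl b₂) f
      = aeval ((inl a : DualNumber ℍ[ℝ]) + eps * inl b₁) f
        + aeval (((inl a : DualNumber ℍ[ℝ]) + eps * inl b₁) ^ 2) l * (eps * inl b₂) := by
  -- basic multiplication helpers in the dual quaternions
  have h0 : ∀ x y : ℍ[ℝ], (eps * inl x : DualNumber ℍ[ℝ]) * (eps * inl y) = 0 := by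
    intro x y
    calc (eps * inl x : DualNumber ℍ[ℝ]) * (eps * inl y)
        = eps * ((inl x * eps) * inl y) := by rw [mul_assoc, mul_assoc]
      _ = eps * ((eps * inl x) * inl y) := by rw [← (commute_eps_left (inl x)).eq]
      _ = (eps * eps) * (inl x * inl y) := by rw [mul_assoc, ← mul_assoc]
      _ = 0 := by rw [eps_mul_eps, zero_mul]
  have hL : ∀ x y : ℍ[ℝ], (inl x : DualNumber ℍ[ℝ]) * (eps * inl y) = eps * inl (x * y) := by
    intro x y
    rw [← mul_assoc, ← (commute_eps_left (inl x)).eq, mul_assoc, inl_mul_inl]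
  have hR : ∀ x y : ℍ[ℝ], (eps * inl x : DualNumber ℍ[ℝ]) * inl y = eps * inl (x * y) := by
    intro x y
    rw [mul_assoc, inl_mul_inl]
  -- β := ε b₂ anticommutes with α := a + ε b₁
  have hanti : (eps * inl b₂ : DualNumber ℍ[ℝ]) * (inl a + eps * inl b₁)
      = -((inl a + eps * inl b₁) * (eps * inl b₂)) := by
    rw [mul_add, add_mul, h0, hL, hR, h0, add_zero, add_zero, hperp, inl_neg, mul_neg]
  have hsq : ((inl a : DualNumber ℍ[ℝ]) + eps * inl b₁ + eps * inl b₂) ^ 2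
      = ((inl a : DualNumber ℍ[ℝ]) + eps * inl b₁) ^ 2 :=
    aux_sq _ _ hanti (h0 _ _)
  -- α² commutes with ε b₂
  have hα2 : ((inl a : DualNumber ℍ[ℝ]) + eps * inl b₁) ^ 2
      = inl (a * a) + eps * inl (a * b₁) + eps * inl (b₁ * a) := by
    rw [sq, mul_add, add_mul, add_mul, h0, hL, hR, inl_mul_inl, add_zero]
    abel
  have hperp' : a * b₂ = -(b₂ * a) := by rw [hperp, neg_neg]
  have haab : a * a * b₂ = b₂ * (a * a) := by
    calc a * a * b₂ = a * (a * b₂) := mul_assoc _ _ _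
      _ = a * (-(b₂ * a)) := by rw [hperp']
      _ = -(a * b₂ * a) := by rw [mul_neg, mul_assoc]
      _ = -(-(b₂ * a) * a) := by rw [← hperp']
      _ = b₂ * (a * a) := by rw [neg_mul, neg_neg, mul_assoc]
  have hcomm : Commute (((inl a : DualNumber ℍ[ℝ]) + eps * inl b₁) ^ 2) (eps * inl b₂) := by
    rw [hα2]
    have c1 : Commute (inl (a * a) : DualNumber ℍ[ℝ]) (eps * inl b₂) := by
      unfold Commute SemiconjBy
      rw [hL, hR, haab]
    have c2 : Commute (eps * inl (a * b₁) : DualNumber ℍ[ℝ]) (eps * inl b₂) := by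
      unfold Commute SemiconjBy
      rw [h0, h0]
    have c3 : Commute (eps * inl (b₁ * a) : DualNumber ℍ[ℝ]) (eps * inl b₂) := by
      unfold Commute SemiconjBy
      rw [h0, h0]
    exact (c1.add_left c2).add_left c3
  -- decompose f
  have hfdecomp : f = k.comp (X ^ 2) + X * l.comp (X ^ 2) :=
    Polynomial.funext fun z => by simp [hf z, eval_comp]
  have heval : ∀ x : DualNumber ℍ[ℝ], aeval x f = aeval (x ^ 2) k + x * aeval (x ^ 2) l := by
    intro x
    rw [hfdecomp, map_add, map_mul, aeval_X, aeval_comp, aeval_comp, aeval_X_pow]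
  rw [heval, heval, hsq, add_mul, (commute_aeval_aux _ _ hcomm l).eq, ← add_assoc]
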